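/- Let A be a finitely generated monoid and let M, N be finite A-modules. Then there are only finitely many admissible short exact sequences 0 → M → L → N → 0 of A-modules, up to isomorphism. -/

import Mathlib

universe u v

/-- A module over a monoid-with-zero `A` on a pointed set ("vector space over 𝔽₁"):
a pointed set `(M, 0)` with an action of `A` satisfying `1•m = m`, `(a*b)•m = a•(b•m)`,
`0•m = 0` and `a•0 = 0`. -/
structure FModule (A : Type v) [MonoidWithZero A] : Type (max (u + 1) v) where
  carrier : Type u
  zero : carrier
  smul : A → carrier → carrier
  one_smul : ∀ m, smul 1 m = m
  mul_smul : ∀ a b m, smul (a * b) m = smul a (smul b m)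
  zero_smul : ∀ m, smul 0 m = zero
  smul_zero : ∀ a, smul a zero = zero

namespace FModule

variable {A : Type v} [MonoidWithZero A]

/-- `N` is an `A`-submodule of `M` : a subset containing the basepoint and closed under
the action of `A`. -/
def IsSubmod (M : FModule A) (N : Set M.carrier) : Prop :=
  M.zero ∈ N ∧ ∀ (a : A), ∀ m ∈ N, M.smul a m ∈ N

/-- The submodule `N ⊆ M` as an `A`-module in its own right. -/
def sub (M : FModule A) (N : Set M.carrier) (h : M.IsSubmod N) : FModule A where
  carrier := N
  zero := ⟨M.zero, h.1⟩
  smul a m := ⟨M.smul a m.1, h.2 a m.1 m.2⟩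
  one_smul m := Subtype.ext (M.one_smul m.1)
  mul_smul a b m := Subtype.ext (M.mul_smul a b m.1)
  zero_smul m := Subtype.ext (M.zero_smul m.1)
  smul_zero a := Subtype.ext (M.smul_zero a)

open Classical in
/-- The quotient `M/N` of `M` by a submodule `N`: the pointed set `(M ∖ N) ∪ {0}`
with the induced `A`-action. -/
noncomputable def quot (M : FModule A) (N : Set M.carrier) (h : M.IsSubmod N) :
    FModule A where
  carrier := {x : M.carrier // x = M.zero ∨ x ∉ N}
  zero := ⟨M.zero, Or.inl rfl⟩
  smul a m := if hmem : M.smul a m.1 ∈ N then ⟨M.zero, Or.inl rfl⟩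
    else ⟨M.smul a m.1, Or.inr hmem⟩
  one_smul := by
    classical
    rintro ⟨x, hx⟩
    by_cases hmem : M.smul 1 x ∈ N
    · have hxN : x ∈ N := by rwa [M.one_smul] at hmem
      have hx0 : x = M.zero := hx.resolve_right fun hc => hc hxN
      simp only [dif_pos hmem]
      exact Subtype.ext hx0.symm
    · simp only [dif_neg hmem]
      exact Subtype.ext (M.one_smul x)
  mul_smul := by
    classical
    rintro a b ⟨x, hx⟩
    by_cases hb : M.smul b x ∈ N
    · have hab : M.smul (a * b) x ∈ N := by
        rw [M.mul_smul]; exact h.2 a _ hb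
      have h0 : M.smul a M.zero ∈ N := by
        rw [M.smul_zero]; exact h.1
      simp only [dif_pos hb, dif_pos hab, dif_pos h0]
    · by_cases hab : M.smul a (M.smul b x) ∈ N
      · have hab' : M.smul (a * b) x ∈ N := by rw [M.mul_smul]; exact hab
        simp only [dif_pos hab', dif_neg hb, dif_pos hab]
      · have hab' : M.smul (a * b) x ∉ N := by rw [M.mul_smul]; exact hab
        simp only [dif_neg hab', dif_neg hb, dif_neg hab]
        exact Subtype.ext (M.mul_smul a b x)
  zero_smul := by
    classical
    rintro ⟨x, hx⟩
    have h0 : M.smul 0 x ∈ N := by rw [M.zero_smul]; exact h.1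
    simp only [dif_pos h0]
  smul_zero := by
    classical
    intro a
    have h0 : M.smul a M.zero ∈ N := by rw [M.smul_zero]; exact h.1
    simp only [dif_pos h0]

/-- A morphism of `A`-modules: a pointed map compatible with the `A`-action. -/
structure Hom (M N : FModule A) where
  toFun : M.carrier → N.carrier
  map_zero : toFun M.zero = N.zero
  map_smul : ∀ a m, toFun (M.smul a m) = N.smul a (toFun m)

/-- A morphism is normal if every fibre other than the fibre of the basepoint has at
most one element. -/
def Hom.Normal {M N : FModule A} (f : Hom M N) : Prop :=
  ∀ m m', f.toFun m = f.toFun m' → f.toFun m ≠ N.zero → m = m'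

/-- Composition of morphisms. -/
def Hom.comp {M N L : FModule A} (g : Hom N L) (f : Hom M N) : Hom M L where
  toFun := g.toFun ∘ f.toFun
  map_zero := by
    show g.toFun (f.toFun M.zero) = L.zero
    rw [f.map_zero, g.map_zero]
  map_smul a m := by
    show g.toFun (f.toFun (M.smul a m)) = L.smul a (g.toFun (f.toFun m))
    rw [f.map_smul, g.map_smul]

/-- An isomorphism of `A`-modules. -/
structure Iso (M N : FModule A) where
  toEquiv : M.carrier ≃ N.carrier
  map_zero : toEquiv M.zero = N.zero
  map_smul : ∀ a m, toEquiv (M.smul a m) = N.smul a (toEquiv m)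

def Iso.refl (M : FModule A) : Iso M M := ⟨Equiv.refl _, rfl, fun _ _ => rfl⟩

def Iso.symm {M N : FModule A} (e : Iso M N) : Iso N M where
  toEquiv := e.toEquiv.symm
  map_zero := by rw [Equiv.symm_apply_eq, e.map_zero]
  map_smul a m := by
    apply e.toEquiv.injective
    rw [e.map_smul, Equiv.apply_symm_apply, Equiv.apply_symm_apply]

def Iso.trans {M N L : FModule A} (e : Iso M N) (f : Iso N L) : Iso M L where
  toEquiv := e.toEquiv.trans f.toEquiv
  map_zero := by
    simp only [Equiv.trans_apply, e.map_zero, f.map_zero]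
  map_smul a m := by
    simp only [Equiv.trans_apply, e.map_smul, f.map_smul]

/-- The wedge sum (direct sum, coproduct) `M ⊕ N` of two `A`-modules, realized as the
subset of `M × N` of pairs with at least one coordinate equal to the basepoint. -/
def wedge (M N : FModule A) : FModule A where
  carrier := {p : M.carrier × N.carrier // p.1 = M.zero ∨ p.2 = N.zero}
  zero := ⟨(M.zero, N.zero), Or.inl rfl⟩
  smul a p := ⟨(M.smul a p.1.1, N.smul a p.1.2), by
    rcases p.2 with h1 | h2
    · exact Or.inl (by rw [h1, M.smul_zero])
    · exact Or.inr (by rw [h2, N.smul_zero])⟩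
  one_smul p := Subtype.ext (Prod.ext (M.one_smul _) (N.one_smul _))
  mul_smul a b p := Subtype.ext (Prod.ext (M.mul_smul _ _ _) (N.mul_smul _ _ _))
  zero_smul p := Subtype.ext (Prod.ext (M.zero_smul _) (N.zero_smul _))
  smul_zero a := Subtype.ext (Prod.ext (M.smul_zero _) (N.smul_zero _))

/-- A module `M` is of type α if every `a ∈ A` acts on `M` by a normal map of pointed
sets, i.e. `a•m₁ = a•m₂` implies `m₁ = m₂` or `a•m₁ = a•m₂ = 0`. -/
def TypeAlpha (M : FModule A) : Prop :=
  ∀ (a : A) (m₁ m₂ : M.carrier),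
    M.smul a m₁ = M.smul a m₂ → m₁ = m₂ ∨ M.smul a m₁ = M.zero

/-- A module is indecomposable if it is nonzero and admits no decomposition as a wedge
sum (internally: a pair of submodules covering `M` and meeting only in `0`) with both
pieces nonzero. -/
def Indecomposable (M : FModule A) : Prop :=
  (∃ m : M.carrier, m ≠ M.zero) ∧
  ∀ P Q : Set M.carrier, M.IsSubmod P → M.IsSubmod Q → P ∪ Q = Set.univ →
    P ∩ Q ⊆ {M.zero} → P = {M.zero} ∨ Q = {M.zero}

end FModule
namespace FModule

variable {A : Type v} [MonoidWithZero A]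

/-- An admissible short exact sequence `0 → M → L → N → 0` of `A`-modules:
a sequence exact at `M`, `L` and `N` in which all morphisms are normal. -/
structure AdmissibleSES (M N : FModule.{u} A) : Type (max (u + 1) v) where
  mid : FModule.{u} A
  inj : Hom M mid
  proj : Hom mid N
  exact_left : ∀ m, inj.toFun m = mid.zero → m = M.zero
  exact_mid : {x | proj.toFun x = N.zero} = Set.range inj.toFun
  exact_right : Function.Surjective proj.toFun
  normal_inj : inj.Normal
  normal_proj : proj.Normal

/-- Isomorphism of admissible short exact sequences `0 → M → L → N → 0`
(identity on `M` and `N`, an isomorphism on the middle terms). -/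
def sesEquiv (M N : FModule.{u} A) (E E' : AdmissibleSES M N) : Prop :=
  ∃ φ : Iso E.mid E'.mid,
    (∀ m, φ.toEquiv (E.inj.toFun m) = E'.inj.toFun m) ∧
    (∀ x, E'.proj.toFun (φ.toEquiv x) = E.proj.toFun x)

end FModule

namespace FModule

variable {A : Type v} [MonoidWithZero A] {M N : FModule.{u} A}

lemma AdmissibleSES.inj_injective (E : AdmissibleSES M N) :
    Function.Injective E.inj.toFun := by
  intro m m' h
  by_cases h0 : E.inj.toFun m = E.mid.zero
  · rw [E.exact_left m h0, E.exact_left m' (h ▸ h0)]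
  · exact E.normal_inj m m' h h0

lemma AdmissibleSES.proj_inj (E : AdmissibleSES M N) (m : M.carrier) :
    E.proj.toFun (E.inj.toFun m) = N.zero := by
  have : E.inj.toFun m ∈ Set.range E.inj.toFun := ⟨m, rfl⟩
  rw [← E.exact_mid] at this
  exact this

lemma AdmissibleSES.mem_range (E : AdmissibleSES M N) {x : E.mid.carrier}
    (h : E.proj.toFun x = N.zero) : ∃ m, E.inj.toFun m = x := by
  have : x ∈ Set.range E.inj.toFun := by rw [← E.exact_mid]; exact h
  exact this

/-- The canonical carrier `M ⊕ (N ∖ {0})`. -/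
def CC (M N : FModule.{u} A) : Type u :=
  M.carrier ⊕ {n : N.carrier // n ≠ N.zero}

open Classical in
/-- The canonical bijection from the middle term of an admissible SES to `M ⊕ (N∖{0})`. -/
noncomputable def AdmissibleSES.eFun (E : AdmissibleSES M N) (x : E.mid.carrier) :
    CC M N :=
  if h : E.proj.toFun x = N.zero then Sum.inl (E.mem_range h).choose
  else Sum.inr ⟨E.proj.toFun x, h⟩

lemma AdmissibleSES.eFun_inj (E : AdmissibleSES M N) (m : M.carrier) :
    E.eFun (E.inj.toFun m) = Sum.inl m := by
  have h := E.proj_inj m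
  rw [eFun]; refine (dif_pos h).trans ?_
  exact congrArg Sum.inl (E.inj_injective (E.mem_range h).choose_spec)

lemma AdmissibleSES.eFun_ne (E : AdmissibleSES M N) {x : E.mid.carrier}
    (h : E.proj.toFun x ≠ N.zero) : E.eFun x = Sum.inr ⟨E.proj.toFun x, h⟩ := by
  rw [eFun]; exact dif_neg h

open Classical in
noncomputable def AdmissibleSES.eEquiv (E : AdmissibleSES M N) :
    E.mid.carrier ≃ CC M N where
  toFun := E.eFun
  invFun c := Sum.rec (fun m => E.inj.toFun m) (fun n => (E.exact_right n.1).choose) c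
  left_inv x := by
    by_cases h : E.proj.toFun x = N.zero
    · obtain ⟨m, hm⟩ := E.mem_range h
      rw [← hm, E.eFun_inj]
    · rw [E.eFun_ne h]
      have hs := (E.exact_right (E.proj.toFun x)).choose_spec
      exact E.normal_proj _ _ hs (by rw [hs]; exact h)
  right_inv c := by
    rcases c with m | ⟨n, hn⟩
    · exact E.eFun_inj m
    · have hs := (E.exact_right n).choose_spec
      simp only []
      rw [E.eFun_ne (by rw [hs]; exact hn)]
      exact congrArg Sum.inr (Subtype.ext hs)

lemma AdmissibleSES.eEquiv_zero (E : AdmissibleSES M N) :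
    E.eEquiv E.mid.zero = Sum.inl M.zero := by
  have : E.mid.zero = E.inj.toFun M.zero := (E.inj.map_zero).symm
  rw [show E.eEquiv E.mid.zero = E.eFun E.mid.zero from rfl, this, E.eFun_inj]

lemma AdmissibleSES.proj_eEquiv_symm_inr (E : AdmissibleSES M N)
    (n : {n : N.carrier // n ≠ N.zero}) :
    E.proj.toFun (E.eEquiv.symm (Sum.inr n)) = n.1 :=
  (E.exact_right n.1).choose_spec

/-- The action of `a : A` transported to the canonical carrier. -/
noncomputable def AdmissibleSES.transported (E : AdmissibleSES M N) (a : A) :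
    CC M N → CC M N :=
  fun c => E.eEquiv (E.mid.smul a (E.eEquiv.symm c))

lemma AdmissibleSES.transported_one (E : AdmissibleSES M N) :
    E.transported 1 = id := by
  funext c
  simp only [transported, E.mid.one_smul, Equiv.apply_symm_apply, id]

lemma AdmissibleSES.transported_mul (E : AdmissibleSES M N) (a b : A) :
    E.transported (a * b) = E.transported a ∘ E.transported b := by
  funext c
  simp only [transported, E.mid.mul_smul, Function.comp_apply, Equiv.symm_apply_apply]

/-- `eEquiv` is compatible with isomorphisms of short exact sequences. -/
lemma AdmissibleSES.eEquiv_iso (E E' : AdmissibleSES M N) (φ : Iso E.mid E'.mid)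
    (hinj : ∀ m, φ.toEquiv (E.inj.toFun m) = E'.inj.toFun m)
    (hproj : ∀ x, E'.proj.toFun (φ.toEquiv x) = E.proj.toFun x)
    (x : E.mid.carrier) : E'.eEquiv (φ.toEquiv x) = E.eEquiv x := by
  by_cases h : E.proj.toFun x = N.zero
  · obtain ⟨m, hm⟩ := E.mem_range h
    rw [← hm, hinj m]
    show E'.eFun _ = E.eFun _
    rw [E'.eFun_inj, E.eFun_inj]
  · have h' : E'.proj.toFun (φ.toEquiv x) ≠ N.zero := by rw [hproj]; exact h
    show E'.eFun _ = E.eFun _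
    rw [E'.eFun_ne h', E.eFun_ne h]
    exact congrArg Sum.inr (Subtype.ext (hproj x))

lemma AdmissibleSES.transported_invariant {E E' : AdmissibleSES M N}
    (h : sesEquiv M N E E') (a : A) : E.transported a = E'.transported a := by
  obtain ⟨φ, hinj, hproj⟩ := h
  funext c
  have key : ∀ x, E'.eEquiv (φ.toEquiv x) = E.eEquiv x :=
    AdmissibleSES.eEquiv_iso E E' φ hinj hproj
  have hsymm : E'.eEquiv.symm c = φ.toEquiv (E.eEquiv.symm c) := by
    apply E'.eEquiv.injective
    rw [Equiv.apply_symm_apply, key, Equiv.apply_symm_apply]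
  simp only [transported, hsymm, ← φ.map_smul, key]

/-- If the transported actions agree for all `a : A`, the sequences are equivalent. -/
lemma AdmissibleSES.equiv_of_transported_eq (E E' : AdmissibleSES M N)
    (h : ∀ a, E.transported a = E'.transported a) : sesEquiv M N E E' := by
  refine ⟨⟨E.eEquiv.trans E'.eEquiv.symm, ?_, ?_⟩, ?_, ?_⟩
  · show E'.eEquiv.symm (E.eEquiv E.mid.zero) = E'.mid.zero
    rw [E.eEquiv_zero, ← E'.eEquiv_zero, Equiv.symm_apply_apply]
  · intro a x
    show E'.eEquiv.symm (E.eEquiv (E.mid.smul a x)) =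
      E'.mid.smul a (E'.eEquiv.symm (E.eEquiv x))
    apply E'.eEquiv.injective
    rw [Equiv.apply_symm_apply]
    have := congrFun (h a) (E.eEquiv x)
    simp only [AdmissibleSES.transported, Equiv.symm_apply_apply] at this
    exact this
  · intro m
    show E'.eEquiv.symm (E.eEquiv (E.inj.toFun m)) = E'.inj.toFun m
    rw [show E.eEquiv (E.inj.toFun m) = Sum.inl m from E.eFun_inj m,
      show (Sum.inl m : CC M N) = E'.eEquiv (E'.inj.toFun m) from (E'.eFun_inj m).symm,
      Equiv.symm_apply_apply]
  · intro x
    show E'.proj.toFun (E'.eEquiv.symm (E.eEquiv x)) = E.proj.toFun x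
    by_cases hx : E.proj.toFun x = N.zero
    · obtain ⟨m, hm⟩ := E.mem_range hx
      rw [← hm, show E.eEquiv (E.inj.toFun m) = Sum.inl m from E.eFun_inj m,
        show (Sum.inl m : CC M N) = E'.eEquiv (E'.inj.toFun m) from (E'.eFun_inj m).symm,
        Equiv.symm_apply_apply, E'.proj_inj, E.proj_inj]
    · rw [show E.eEquiv x = Sum.inr ⟨E.proj.toFun x, hx⟩ from E.eFun_ne hx,
        E'.proj_eEquiv_symm_inr]

end FModule

open FModule in
/-- For a finitely generated monoid `A` and finite `A`-modules `M`, `N`, there are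
only finitely many admissible short exact sequences `0 → M → L → N → 0` up to
isomorphism. -/
theorem finitely_many_admissible_ses {A : Type v} [MonoidWithZero A] [Monoid.FG A]
    (M N : FModule.{u} A) (hM : Finite M.carrier) (hN : Finite N.carrier) :
    Finite (Quot (sesEquiv M N)) := by
  obtain ⟨S, hS, hSfin⟩ := Monoid.fg_iff.mp ‹Monoid.FG A›
  haveI : Finite M.carrier := hM
  haveI : Finite N.carrier := hN
  haveI : Finite (CC M N) := by unfold CC; infer_instance
  haveI := hSfin.to_subtype
  let g : AdmissibleSES M N → (S → CC M N → CC M N) := fun E s => E.transported s.1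
  have hg : ∀ E E', sesEquiv M N E E' → g E = g E' := fun E E' h =>
    funext fun s => AdmissibleSES.transported_invariant h s.1
  let F : Quot (sesEquiv M N) → (S → CC M N → CC M N) := Quot.lift g hg
  have hF : Function.Injective F := by
    intro q q'
    induction q using Quot.ind with | _ E =>
    induction q' using Quot.ind with | _ E' =>
    intro h
    apply Quot.sound
    apply AdmissibleSES.equiv_of_transported_eq
    intro a
    have ha : a ∈ Submonoid.closure S := hS ▸ Submonoid.mem_top a
    induction ha using Submonoid.closure_induction with
    | mem x hx => exact congrFun h ⟨x, hx⟩
    | one => rw [E.transported_one, E'.transported_one]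
    | mul x y hx hy ihx ihy =>
        rw [E.transported_mul, E'.transported_mul, ihx, ihy]
  exact Finite.of_injective F hF
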